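/- For every α > 0 and τ ∈ [0,1] and every ε ∈ ℝ, the smooth quantile loss satisfies 0 ≤ l(ε; τ, α) − ρ_τ(ε) ≤ α·log 2, where ρ_τ is the pinball loss; hence the smooth quantile loss converges uniformly to the pinball loss as α → 0⁺. -/

import Mathlib

lemma log_one_add_exp_neg_bounds (y : ℝ) (hy : 0 ≤ y) :
    0 ≤ Real.log (1 + Real.exp (-y)) ∧ Real.log (1 + Real.exp (-y)) ≤ Real.log 2 := by
  constructor
  · apply Real.log_nonneg
    have := Real.exp_pos (-y)
    linarith
  · apply Real.log_le_log (by positivity)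
    have : Real.exp (-y) ≤ 1 := Real.exp_le_one_iff.mpr (by linarith)
    linarith

lemma log_shift (x : ℝ) : Real.log (1 + Real.exp x) = x + Real.log (1 + Real.exp (-x)) := by
  have h : (1 : ℝ) + Real.exp x = Real.exp x * (1 + Real.exp (-x)) := by
    rw [mul_add, mul_one, ← Real.exp_add]
    simp [add_comm]
  rw [h, Real.log_mul (Real.exp_ne_zero x) (by positivity), Real.log_exp]

theorem smooth_quantile_loss_uniform_bound (τ α ε : ℝ) (hτ0 : 0 ≤ τ) (hτ1 : τ ≤ 1) (hα : 0 < α) :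
    0 ≤ (τ * ε + α * Real.log (1 + Real.exp (-ε / α)))
          - (if 0 ≤ ε then τ * ε else (τ - 1) * ε)
    ∧ (τ * ε + α * Real.log (1 + Real.exp (-ε / α)))
          - (if 0 ≤ ε then τ * ε else (τ - 1) * ε) ≤ α * Real.log 2 := by
  by_cases hε : 0 ≤ ε
  · simp only [if_pos hε]
    have hy : 0 ≤ ε / α := div_nonneg hε hα.le
    have := log_one_add_exp_neg_bounds (ε / α) hy
    rw [← neg_div] at this
    constructor
    · nlinarith [this.1]
    · nlinarith [this.2]
  · simp only [if_neg hε]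
    push_neg at hε
    have hy : 0 ≤ -ε / α := div_nonneg (by linarith) hα.le
    have hb := log_one_add_exp_neg_bounds (-ε / α) hy
    have hs := log_shift (-ε / α)
    have hnn : -(-ε / α) = ε / α := by ring
    rw [hnn] at hb hs
    -- goal has log (1 + exp (-ε / α)) = log (1 + exp (-(ε/α)))
    have hεα : α * (-ε / α) = -ε := by field_simp
    constructor
    · nlinarith [hb.1, hs, hεα]
    · nlinarith [hb.2, hs, hεα]
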